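/- Under self-normalization (p(y|x) = exp(s(x,y;θ*)-γ*)), the pair (θ*,γ*) maximizes the population binary objective L_B^∞(θ,γ) = Σ_{x,y} [p_{X,Y}(x,y) log g(x,y;θ,γ) + K·p_X(x)p_N(y) log(1-g(x,y;θ,γ))], and any maximizer (θ̄,γ̄) satisfies exp(s(x,y;θ̄)-γ̄) = p(y|x) for all x, y. -/

import Mathlib

private lemma gibbs_aux (a b t : ℝ) (ha : 0 < a) (hb : 0 < b)
    (ht0 : 0 < t) (ht1 : t < 1) :
    a * Real.log t + b * Real.log (1 - t)
      ≤ a * Real.log (a / (a + b)) + b * Real.log (b / (a + b)) ∧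
    (t ≠ a / (a + b) →
      a * Real.log t + b * Real.log (1 - t)
        < a * Real.log (a / (a + b)) + b * Real.log (b / (a + b))) := by
  have hab : 0 < a + b := by linarith
  have h1t : 0 < 1 - t := by linarith
  have e1 : Real.log t - Real.log (a / (a + b)) = Real.log (t * (a + b) / a) := by
    rw [Real.log_div (by positivity) ha.ne', Real.log_div ha.ne' hab.ne',
      Real.log_mul ht0.ne' hab.ne']
    ring
  have e2 : Real.log (1 - t) - Real.log (b / (a + b)) = Real.log ((1 - t) * (a + b) / b) := by
    rw [Real.log_div (by positivity) hb.ne', Real.log_div hb.ne' hab.ne',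
      Real.log_mul h1t.ne' hab.ne']
    ring
  have E1 : a * Real.log t = a * Real.log (a / (a + b)) + a * Real.log (t * (a + b) / a) := by
    linear_combination a * e1
  have E2 : b * Real.log (1 - t)
      = b * Real.log (b / (a + b)) + b * Real.log ((1 - t) * (a + b) / b) := by
    linear_combination b * e2
  have h2 : Real.log ((1 - t) * (a + b) / b) ≤ (1 - t) * (a + b) / b - 1 :=
    Real.log_le_sub_one_of_pos (by positivity)
  have h3 : Real.log (t * (a + b) / a) ≤ t * (a + b) / a - 1 :=
    Real.log_le_sub_one_of_pos (by positivity)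
  have hzero : a * (t * (a + b) / a - 1) + b * ((1 - t) * (a + b) / b - 1) = 0 := by
    field_simp
    ring
  constructor
  · nlinarith [mul_le_mul_of_nonneg_left h3 ha.le, mul_le_mul_of_nonneg_left h2 hb.le]
  · intro hne
    have hne1 : t * (a + b) / a ≠ 1 := by
      intro h
      apply hne
      rw [div_eq_one_iff_eq ha.ne'] at h
      rw [eq_div_iff hab.ne']
      linarith
    have h3' : Real.log (t * (a + b) / a) < t * (a + b) / a - 1 :=
      Real.log_lt_sub_one_of_pos (by positivity) hne1
    nlinarith [mul_lt_mul_of_pos_left h3' ha, mul_le_mul_of_nonneg_left h2 hb.le]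

/-- Under self-normalization `p(y|x) = exp(s(x,y;θ*) - γ*)`, the pair `(θ*, γ*)`
maximizes the population binary NCE objective, and any maximizer `(θ̄, γ̄)`
satisfies `exp(s(x,y;θ̄) - γ̄) = p(y|x)` for all `x, y`. -/
theorem binary_objective_consistency (X Y : Type) [Fintype X] [Fintype Y]
    (K : ℕ) (hK : 1 ≤ K)
    (Θ : Type) (θs : Θ) (γs : ℝ)
    (pX : X → ℝ) (hpX : ∀ x, 0 < pX x) (hpXsum : ∑ x, pX x = 1)
    (pN : Y → ℝ) (hpN : ∀ y, 0 < pN y) (hpNsum : ∑ y, pN y = 1)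
    (s : X → Y → Θ → ℝ)
    (pXY : X → Y → ℝ)
    (hmodel : ∀ x y, pXY x y = pX x * Real.exp (s x y θs - γs))
    (sb : X → Y → Θ → ℝ) (hsb : ∀ x y θ, sb x y θ = s x y θ - Real.log (pN y))
    (g : X → Y → Θ → ℝ → ℝ)
    (hg : ∀ x y θ γ, g x y θ γ
      = Real.exp (sb x y θ - γ) / (Real.exp (sb x y θ - γ) + K))
    (L : Θ → ℝ → ℝ)
    (hL : ∀ θ γ, L θ γ = ∑ x, ∑ y,
      (pXY x y * Real.log (g x y θ γ)
        + K * (pX x * pN y) * Real.log (1 - g x y θ γ))) :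
    (∀ θ γ, L θ γ ≤ L θs γs) ∧
    (∀ θb γb, (∀ θ γ, L θ γ ≤ L θb γb) →
      ∀ x y, Real.exp (s x y θb - γb) = Real.exp (s x y θs - γs)) := by
  have hKpos : (0:ℝ) < K := by exact_mod_cast Nat.lt_of_lt_of_le Nat.zero_lt_one hK
  have hpXY : ∀ x y, 0 < pXY x y := fun x y => by
    rw [hmodel]; have := Real.exp_pos (s x y θs - γs); have := hpX x; positivity
  have hu : ∀ x y θ γ, Real.exp (sb x y θ - γ) = Real.exp (s x y θ - γ) / pN y := by
    intro x y θ γ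
    rw [hsb, show s x y θ - Real.log (pN y) - γ = (s x y θ - γ) - Real.log (pN y) by ring,
      Real.exp_sub, Real.exp_log (hpN y)]
  have hg0 : ∀ x y θ γ, 0 < g x y θ γ := by
    intro x y θ γ
    rw [hg]
    have := Real.exp_pos (sb x y θ - γ)
    positivity
  have hg1 : ∀ x y θ γ, g x y θ γ < 1 := by
    intro x y θ γ
    rw [hg]
    have := Real.exp_pos (sb x y θ - γ)
    rw [div_lt_one (by positivity)]
    linarith
  have hgs : ∀ x y, g x y θs γs = pXY x y / (pXY x y + K * (pX x * pN y)) := by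
    intro x y
    rw [hg, hu, hmodel]
    have h1 := (hpN y).ne'
    have h2 := (hpX x).ne'
    have h3 := Real.exp_pos (s x y θs - γs)
    have d1 : 0 < Real.exp (s x y θs - γs) / pN y + (K:ℝ) :=
      add_pos (div_pos h3 (hpN y)) hKpos
    have d2 : 0 < pX x * Real.exp (s x y θs - γs) + (K:ℝ) * (pX x * pN y) :=
      add_pos (mul_pos (hpX x) h3) (mul_pos hKpos (mul_pos (hpX x) (hpN y)))
    rw [div_eq_div_iff d1.ne' d2.ne']
    field_simp
  have hb1 : ∀ x y, 1 - g x y θs γs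
      = K * (pX x * pN y) / (pXY x y + K * (pX x * pN y)) := by
    intro x y
    rw [hgs]
    have h1 := hpXY x y
    have h2 : 0 < K * (pX x * pN y) := by
      have := hpX x; have := hpN y; positivity
    rw [eq_div_iff (add_pos h1 h2).ne', sub_mul, div_mul_cancel₀ _ (add_pos h1 h2).ne']
    ring
  -- pointwise inequality
  have hterm : ∀ θ γ x y,
      pXY x y * Real.log (g x y θ γ) + K * (pX x * pN y) * Real.log (1 - g x y θ γ)
        ≤ pXY x y * Real.log (g x y θs γs)
          + K * (pX x * pN y) * Real.log (1 - g x y θs γs) := by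
    intro θ γ x y
    have hb : (0:ℝ) < K * (pX x * pN y) := by
      have := hpX x; have := hpN y; positivity
    have := (gibbs_aux (pXY x y) (K * (pX x * pN y)) (g x y θ γ)
      (hpXY x y) hb (hg0 x y θ γ) (hg1 x y θ γ)).1
    rw [hb1, hgs]
    exact this
  have hterm_lt : ∀ θ γ x y, g x y θ γ ≠ g x y θs γs →
      pXY x y * Real.log (g x y θ γ) + K * (pX x * pN y) * Real.log (1 - g x y θ γ)
        < pXY x y * Real.log (g x y θs γs)
          + K * (pX x * pN y) * Real.log (1 - g x y θs γs) := by
    intro θ γ x y hne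
    have hb : (0:ℝ) < K * (pX x * pN y) := by
      have := hpX x; have := hpN y; positivity
    have := (gibbs_aux (pXY x y) (K * (pX x * pN y)) (g x y θ γ)
      (hpXY x y) hb (hg0 x y θ γ) (hg1 x y θ γ)).2 (by rw [← hgs]; exact hne)
    rw [hb1, hgs]
    exact this
  have part1 : ∀ θ γ, L θ γ ≤ L θs γs := by
    intro θ γ
    rw [hL, hL]
    exact Finset.sum_le_sum fun x _ => Finset.sum_le_sum fun y _ => hterm θ γ x y
  refine ⟨part1, ?_⟩
  intro θb γb hmax x y
  have hgeq : g x y θb γb = g x y θs γs := by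
    by_contra hne
    have hlt : L θb γb < L θs γs := by
      rw [hL, hL, ← Finset.sum_product', ← Finset.sum_product']
      refine Finset.sum_lt_sum (fun p _ => hterm θb γb p.1 p.2) ⟨(x, y), Finset.mem_univ _, ?_⟩
      exact hterm_lt θb γb x y hne
    linarith [hmax θs γs]
  rw [hg, hg] at hgeq
  have hue := Real.exp_pos (sb x y θb - γb)
  have hve := Real.exp_pos (sb x y θs - γs)
  rw [div_eq_div_iff (by positivity) (by positivity)] at hgeq
  have huv : Real.exp (sb x y θb - γb) = Real.exp (sb x y θs - γs) := by
    have h : Real.exp (sb x y θb - γb) * K = Real.exp (sb x y θs - γs) * K := by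
      linear_combination hgeq
    exact mul_right_cancel₀ hKpos.ne' h
  rw [hu, hu, div_eq_div_iff (hpN y).ne' (hpN y).ne'] at huv
  exact mul_right_cancel₀ (hpN y).ne' huv
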